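/- Let Γ be an edge-regular graph with parameters (16,6,2) in which some vertex lies in a 4-clique. Then every vertex of Γ lies in exactly two 4-cliques, and any two distinct 4-cliques through a common vertex meet exactly in that vertex. -/

import Mathlib

open Finset

section Aux

variable {V : Type*} [Fintype V] [DecidableEq V] (G : SimpleGraph V) [DecidableRel G.Adj]

lemma common_card_eq (u v : V) :
    (G.neighborFinset u ∩ G.neighborFinset v).card = Fintype.card (G.commonNeighbors u v) := by
  rw [← Set.toFinset_card]
  congr 1
  ext w
  rw [Set.mem_toFinset]
  simp [SimpleGraph.commonNeighbors, SimpleGraph.mem_neighborFinset]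

variable (hreg : G.IsRegularOfDegree 6)
    (hlam : ∀ u v : V, G.Adj u v → Fintype.card (G.commonNeighbors u v) = 2)

include hreg hlam in
/-- Key local lemma: if `x` lies in the 4-clique `C`, then there is exactly one
other 4-clique `C'` through `x`, and `C ∩ C' = {x}`. -/
lemma cliques_through (x : V) (C : Finset V) (hC : C ∈ G.cliqueFinset 4) (hx : x ∈ C) :
    ∃ C', C' ∈ G.cliqueFinset 4 ∧ x ∈ C' ∧ C ∩ C' = {x} ∧
      (G.cliqueFinset 4).filter (fun D => x ∈ D) = {C, C'} ∧
      C.erase x ∪ C'.erase x = G.neighborFinset x := by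
  rw [SimpleGraph.mem_cliqueFinset_iff, SimpleGraph.isNClique_iff] at hC
  obtain ⟨hCclique, hCcard⟩ := hC
  set N : Finset V := G.neighborFinset x with hN
  have hNcard : N.card = 6 := hreg x
  set A : Finset V := C.erase x with hA
  have hAcard : A.card = 3 := by rw [hA, card_erase_of_mem hx, hCcard]
  have hAsub : A ⊆ N := by
    intro a ha
    rw [hN, SimpleGraph.mem_neighborFinset]
    exact hCclique hx (mem_of_mem_erase ha) (ne_of_mem_erase ha).symm
  -- for a ∈ A, the common neighbors of x and a are exactly A.erase a
  have hcomm : ∀ a ∈ A, N ∩ G.neighborFinset a = A.erase a := by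
    intro a ha
    have hadj : G.Adj x a := by
      rw [← SimpleGraph.mem_neighborFinset]; exact hAsub ha
    have hsub : A.erase a ⊆ N ∩ G.neighborFinset a := by
      intro b hb
      have hbA := mem_of_mem_erase hb
      simp only [mem_inter, SimpleGraph.mem_neighborFinset]
      refine ⟨?_, hCclique (mem_of_mem_erase ha) (mem_of_mem_erase hbA)
        (ne_of_mem_erase hb).symm⟩
      · exact hAsub hbA
    have hcard2 : (N ∩ G.neighborFinset a).card = 2 := by
      rw [common_card_eq]; exact hlam x a hadj
    have : (A.erase a).card = 2 := by rw [card_erase_of_mem ha, hAcard]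
    exact (eq_of_subset_of_card_le hsub (by omega)).symm
  set D : Finset V := N \ A with hD
  have hDcard : D.card = 3 := by
    rw [hD, card_sdiff_of_subset hAsub, hNcard, hAcard]
  -- no vertex of A is adjacent to a vertex of D
  have hnoAD : ∀ a ∈ A, ∀ d ∈ D, ¬ G.Adj a d := by
    intro a ha d hd hadj
    have : d ∈ N ∩ G.neighborFinset a := by
      rw [mem_inter]
      exact ⟨(mem_sdiff.mp hd).1, (SimpleGraph.mem_neighborFinset _ _ _).mpr hadj⟩
    rw [hcomm a ha] at this
    exact (mem_sdiff.mp hd).2 (mem_of_mem_erase this)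
  -- for d ∈ D, common neighbors of x and d are exactly D.erase d
  have hcommD : ∀ d ∈ D, N ∩ G.neighborFinset d = D.erase d := by
    intro d hd
    have hdN : d ∈ N := (mem_sdiff.mp hd).1
    have hadj : G.Adj x d := by rwa [hN, SimpleGraph.mem_neighborFinset] at hdN
    have hsub : N ∩ G.neighborFinset d ⊆ D.erase d := by
      intro b hb
      rw [mem_inter] at hb
      have hb2 : G.Adj d b := (SimpleGraph.mem_neighborFinset _ _ _).mp hb.2
      have hbd : b ≠ d := fun h => G.irrefl (h ▸ hb2)
      have hbA : b ∉ A := fun hbA => hnoAD b hbA d hd hb2.symm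
      exact mem_erase.mpr ⟨hbd, mem_sdiff.mpr ⟨hb.1, hbA⟩⟩
    have hcard2 : (N ∩ G.neighborFinset d).card = 2 := by
      rw [common_card_eq]; exact hlam x d hadj
    have : (D.erase d).card = 2 := by rw [card_erase_of_mem hd, hDcard]
    exact eq_of_subset_of_card_le hsub (by omega)
  -- D is a clique, hence insert x D is a 4-clique
  have hDadj : ∀ d ∈ D, ∀ d' ∈ D, d ≠ d' → G.Adj d d' := by
    intro d hd d' hd' hne
    have h1 : d' ∈ D.erase d := mem_erase.mpr ⟨hne.symm, hd'⟩
    rw [← hcommD d hd, mem_inter] at h1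
    exact (SimpleGraph.mem_neighborFinset _ _ _).mp h1.2
  have hxD : x ∉ D := by
    intro hxD
    have := (mem_sdiff.mp hxD).1
    rw [hN, SimpleGraph.mem_neighborFinset] at this
    exact G.irrefl this
  set C' : Finset V := insert x D with hC'
  have hC'mem : C' ∈ G.cliqueFinset 4 := by
    rw [SimpleGraph.mem_cliqueFinset_iff, SimpleGraph.isNClique_iff]
    constructor
    · intro u hu v hv huv
      simp only [hC', coe_insert, Set.mem_insert_iff, mem_coe] at hu hv
      rcases hu with rfl | hu
      · rcases hv with rfl | hv
        · exact absurd rfl huv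
        · have := (mem_sdiff.mp hv).1
          rwa [hN, SimpleGraph.mem_neighborFinset] at this
      · rcases hv with rfl | hv
        · have := (mem_sdiff.mp hu).1
          rw [hN, SimpleGraph.mem_neighborFinset] at this
          exact this.symm
        · exact hDadj u hu v hv huv
    · rw [card_insert_of_notMem hxD, hDcard]
  have hxC' : x ∈ C' := mem_insert_self x D
  -- the intersection C ∩ C' = {x}
  have hinter : C ∩ C' = {x} := by
    ext y
    simp only [mem_inter, mem_singleton]
    constructor
    · rintro ⟨hyC, hyC'⟩
      by_contra hyx
      have hyA : y ∈ A := mem_erase.mpr ⟨hyx, hyC⟩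
      rcases mem_insert.mp hyC' with rfl | hyD
      · exact hyx rfl
      · exact (mem_sdiff.mp hyD).2 hyA
    · rintro rfl; exact ⟨hx, hxC'⟩
  have hcover : C.erase x ∪ C'.erase x = G.neighborFinset x := by
    rw [hC', erase_insert hxD, ← hA, ← hN, hD, union_sdiff_of_subset hAsub]
  refine ⟨C', hC'mem, hxC', hinter, ?_, hcover⟩
  -- any 4-clique through x is C or C'
  ext E
  simp only [mem_filter, mem_insert, mem_singleton]
  constructor
  · rintro ⟨hE, hxE⟩
    rw [SimpleGraph.mem_cliqueFinset_iff, SimpleGraph.isNClique_iff] at hE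
    obtain ⟨hEclique, hEcard⟩ := hE
    set T : Finset V := E.erase x with hT
    have hTcard : T.card = 3 := by rw [hT, card_erase_of_mem hxE, hEcard]
    have hTsub : T ⊆ N := by
      intro t ht
      rw [hN, SimpleGraph.mem_neighborFinset]
      exact hEclique hxE (mem_of_mem_erase ht) (ne_of_mem_erase ht).symm
    have hErec : E = insert x T := by
      rw [hT, insert_erase hxE]
    by_cases hTA : ∃ a, a ∈ T ∩ A
    · obtain ⟨a, ha⟩ := hTA
      rw [mem_inter] at ha
      -- T.erase a ⊆ common nbrs of x and a = A.erase a
      have hsub : T.erase a ⊆ A.erase a := by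
        rw [← hcomm a ha.2]
        intro b hb
        have hbT := mem_of_mem_erase hb
        simp only [mem_inter, SimpleGraph.mem_neighborFinset]
        refine ⟨?_, hEclique (mem_of_mem_erase ha.1) (mem_of_mem_erase hbT)
          (ne_of_mem_erase hb).symm⟩
        · exact hTsub hbT
      have h1 : (T.erase a).card = 2 := by rw [card_erase_of_mem ha.1, hTcard]
      have h2 : (A.erase a).card = 2 := by rw [card_erase_of_mem ha.2, hAcard]
      have heq : T.erase a = A.erase a := eq_of_subset_of_card_le hsub (by omega)
      have hTA' : T = A := by
        rw [← insert_erase ha.1, ← insert_erase ha.2, heq]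
      left
      rw [hErec, hTA', hA, insert_erase hx]
    · push_neg at hTA
      have hTD : T ⊆ D := by
        intro t ht
        have : t ∉ A := fun hA' => hTA t (mem_inter.mpr ⟨ht, hA'⟩)
        exact mem_sdiff.mpr ⟨hTsub ht, this⟩
      have : T = D := eq_of_subset_of_card_le hTD (by omega)
      right
      rw [hErec, this]
  · rintro (rfl | rfl)
    · exact ⟨SimpleGraph.mem_cliqueFinset_iff.mpr ⟨hCclique, hCcard⟩, hx⟩
    · exact ⟨hC'mem, hxC'⟩

end Aux

/-- In an edge-regular graph with parameters (16,6,2) having some vertex in a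
4-clique, every vertex lies in exactly two 4-cliques, and any two distinct
4-cliques through a common vertex meet exactly in that vertex. -/
theorem two_four_cliques (V : Type*) [Fintype V] [DecidableEq V]
    (G : SimpleGraph V) [DecidableRel G.Adj]
    (hcard : Fintype.card V = 16)
    (hreg : G.IsRegularOfDegree 6)
    (hlam : ∀ u v : V, G.Adj u v → Fintype.card (G.commonNeighbors u v) = 2)
    (hexists : ∃ x : V, ∃ C ∈ G.cliqueFinset 4, x ∈ C) :
    (∀ x : V, ((G.cliqueFinset 4).filter (fun C => x ∈ C)).card = 2) ∧
    (∀ x : V, ∀ C₁ ∈ G.cliqueFinset 4, ∀ C₂ ∈ G.cliqueFinset 4,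
      C₁ ≠ C₂ → x ∈ C₁ → x ∈ C₂ → C₁ ∩ C₂ = {x}) := by
  classical
  -- S : vertices lying in some 4-clique
  set S : Finset V := Finset.univ.filter (fun x => ∃ C ∈ G.cliqueFinset 4, x ∈ C) with hS
  -- S is closed under adjacency
  have hclosed : ∀ x ∈ S, ∀ y : V, G.Adj x y → y ∈ S := by
    intro x hxS y hxy
    rw [hS, mem_filter] at hxS
    obtain ⟨-, C, hC, hxC⟩ := hxS
    obtain ⟨C', hC', hxC', -, -, hcover⟩ := cliques_through G hreg hlam x C hC hxC
    rw [hS, mem_filter]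
    refine ⟨mem_univ y, ?_⟩
    have hyN : y ∈ G.neighborFinset x := by rwa [SimpleGraph.mem_neighborFinset]
    rw [← hcover, mem_union] at hyN
    rcases hyN with h | h
    · exact ⟨C, hC, mem_of_mem_erase h⟩
    · exact ⟨C', hC', mem_of_mem_erase h⟩
  -- any nonempty adjacency-closed set has at least 10 elements
  have hbig : ∀ T : Finset V, T.Nonempty → (∀ x ∈ T, ∀ y : V, G.Adj x y → y ∈ T) →
      10 ≤ T.card := by
    intro T ⟨u, hu⟩ hTclosed
    have hNu : (G.neighborFinset u).card = 6 := hreg u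
    have hne : (G.neighborFinset u).Nonempty := by
      rw [← card_pos, hNu]; norm_num
    obtain ⟨w, hw⟩ := hne
    have hadj : G.Adj u w := by rwa [SimpleGraph.mem_neighborFinset] at hw
    have hsub : G.neighborFinset u ∪ G.neighborFinset w ⊆ T := by
      intro z hz
      rw [mem_union, SimpleGraph.mem_neighborFinset, SimpleGraph.mem_neighborFinset] at hz
      rcases hz with h | h
      · exact hTclosed u hu z h
      · exact hTclosed w (hTclosed u hu w hadj) z h
    have hcardU : (G.neighborFinset u ∪ G.neighborFinset w).card = 10 := by
      have h1 := card_union_add_card_inter (G.neighborFinset u) (G.neighborFinset w)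
      have h2 : (G.neighborFinset u ∩ G.neighborFinset w).card = 2 := by
        rw [common_card_eq]; exact hlam u w hadj
      have h3 : (G.neighborFinset u).card = 6 := hreg u
      have h4 : (G.neighborFinset w).card = 6 := hreg w
      omega
    calc 10 = (G.neighborFinset u ∪ G.neighborFinset w).card := hcardU.symm
      _ ≤ T.card := card_le_card hsub
  -- S = univ
  have hSuniv : S = Finset.univ := by
    by_contra hne
    have hSlt : S.card < Fintype.card V := by
      rcases lt_or_eq_of_le (card_le_univ S) with h | h
      · exact h
      · exact absurd (eq_univ_of_card S h) hne
    have hScne : Sᶜ.Nonempty := by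
      rw [← card_pos, card_compl]
      omega
    have hSne : S.Nonempty := by
      obtain ⟨x, C, hC, hxC⟩ := hexists
      exact ⟨x, by rw [hS, mem_filter]; exact ⟨mem_univ x, C, hC, hxC⟩⟩
    have hScclosed : ∀ x ∈ Sᶜ, ∀ y : V, G.Adj x y → y ∈ Sᶜ := by
      intro x hx y hxy
      rw [mem_compl] at *
      intro hyS
      exact hx (hclosed y hyS x hxy.symm)
    have h1 := hbig S hSne hclosed
    have h2 := hbig Sᶜ hScne hScclosed
    have h3 : S.card + Sᶜ.card = 16 := by
      have h4 := card_le_univ S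
      rw [card_compl]
      omega
    omega
  -- every vertex lies in some 4-clique
  have hall : ∀ x : V, ∃ C ∈ G.cliqueFinset 4, x ∈ C := by
    intro x
    have : x ∈ S := hSuniv ▸ mem_univ x
    rw [hS, mem_filter] at this
    exact this.2
  constructor
  · intro x
    obtain ⟨C, hC, hxC⟩ := hall x
    obtain ⟨C', hC', hxC', hinter, hfilter, -⟩ := cliques_through G hreg hlam x C hC hxC
    rw [hfilter]
    have hCC' : C ≠ C' := by
      intro h
      rw [h, inter_self] at hinter
      have h4 : C'.card = 4 := (SimpleGraph.mem_cliqueFinset_iff.mp hC').2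
      rw [hinter] at h4
      simp at h4
    rw [card_insert_of_notMem (by simpa using hCC'), card_singleton]
  · intro x C₁ hC₁ C₂ hC₂ hne hx₁ hx₂
    obtain ⟨C, hC, hxC⟩ := hall x
    obtain ⟨C', hC', hxC', hinter, hfilter, -⟩ := cliques_through G hreg hlam x C hC hxC
    have h₁ : C₁ ∈ ({C, C'} : Finset (Finset V)) := by
      rw [← hfilter, mem_filter]; exact ⟨hC₁, hx₁⟩
    have h₂ : C₂ ∈ ({C, C'} : Finset (Finset V)) := by
      rw [← hfilter, mem_filter]; exact ⟨hC₂, hx₂⟩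
    rw [mem_insert, mem_singleton] at h₁ h₂
    rcases h₁ with rfl | rfl <;> rcases h₂ with rfl | rfl
    · exact absurd rfl hne
    · exact hinter
    · rw [inter_comm]; exact hinter
    · exact absurd rfl hne
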